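/- Stationarity of ρ: For every λ ∈ (0,1) and L ∈ ℕ, the probability vector ρ on {0,…,L} defined by ρ(x) = λ/(1+(L−1)λ) for 0 ≤ x ≤ L−1 and ρ(L) = (1−λ)/(1+(L−1)λ) is a stationary distribution of the transition matrix P_{λ,L}, i.e., ρ P_{λ,L} = ρ (as a left eigenvector with eigenvalue 1), and ρ sums to 1. -/

import Mathlib

/-!
Stationarity of `ρ`: for every `λ ∈ (0,1)` and `L ∈ ℕ`, the probability vector `ρ` on
`{0,…,L}` defined by `ρ(x) = λ/(1+(L−1)λ)` for `0 ≤ x ≤ L−1` and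
`ρ(L) = (1−λ)/(1+(L−1)λ)` is a stationary distribution of the transition matrix
`P_{λ,L}`: it sums to `1` and `ρ P_{λ,L} = ρ`.
-/

open Finset

noncomputable section

namespace MTD1D

/-- The transition matrix `P_{λ,L}` on the states `{0,…,L}`:
for a row `i ∈ {0,…,L−1}` the entries are `(1−λ)^{j−i} λ` for `i ≤ j ≤ L−1`,
`(1−λ)^{L−i}` for `j = L`, and `0` for `j < i`; row `L` equals row `0`. -/
def Pmat (L : ℕ) (lam : ℝ) (i j : Fin (L+1)) : ℝ :=
  let i' : ℕ := if i.val = L then 0 else i.val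
  if j.val = L then (1 - lam)^(L - i')
  else if i' ≤ j.val then (1 - lam)^(j.val - i') * lam
  else 0

/-- The vector `ρ` on `{0,…,L}`: `ρ(x) = λ/(1+(L−1)λ)` for `x < L`,
`ρ(L) = (1−λ)/(1+(L−1)λ)`. -/
def rho (L : ℕ) (lam : ℝ) (x : Fin (L+1)) : ℝ :=
  if x.val = L then (1 - lam) / (1 + ((L:ℝ) - 1) * lam)
  else lam / (1 + ((L:ℝ) - 1) * lam)

/-- **Stationarity of `ρ`**: `ρ` is a probability vector and a left eigenvector of
`P_{λ,L}` with eigenvalue `1`, i.e. `ρ P_{λ,L} = ρ`. -/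
theorem rho_stationary (L : ℕ) (lam : ℝ) (h0 : 0 < lam) (h1 : lam < 1) :
    (∑ x : Fin (L+1), rho L lam x = 1) ∧
    (∀ j : Fin (L+1), ∑ i : Fin (L+1), rho L lam i * Pmat L lam i j = rho L lam j) := by
  set q : ℝ := 1 - lam with hq
  have hLl : (0:ℝ) ≤ (L:ℝ) * lam := mul_nonneg (Nat.cast_nonneg L) h0.le
  have hDpos : (0:ℝ) < 1 + ((L:ℝ) - 1) * lam := by nlinarith
  have hD : (1 + ((L:ℝ) - 1) * lam) ≠ 0 := ne_of_gt hDpos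
  have hg : ∀ n : ℕ, (∑ k ∈ Finset.range n, q^k) * lam = 1 - q^n := by
    intro n
    have := geom_sum_mul q n
    have hq1 : q - 1 = -lam := by rw [hq]; ring
    rw [hq1] at this
    linarith [this]
  constructor
  · rw [Fin.sum_univ_castSucc]
    have h1' : ∀ i : Fin L, rho L lam i.castSucc = lam / (1 + ((L:ℝ) - 1) * lam) := by
      intro i
      simp [rho, Fin.castSucc, (Nat.lt_iff_le_and_ne.mp i.isLt).2]
    rw [Finset.sum_congr rfl (fun i _ => h1' i)]
    simp [rho, Fin.last]
    rw [mul_div_assoc', ← add_div, div_eq_one_iff_eq hD]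
    ring
  · intro j
    rw [Fin.sum_univ_castSucc]
    by_cases hj : j.val = L
    · -- column L
      have hrow : ∀ i : Fin L,
          rho L lam i.castSucc * Pmat L lam i.castSucc j
            = lam / (1 + ((L:ℝ) - 1) * lam) * q^(L - i.val) := by
        intro i
        have hi : (i.castSucc : Fin (L+1)).val = i.val := rfl
        have hiL : i.val ≠ L := (Nat.lt_iff_le_and_ne.mp i.isLt).2
        simp [rho, Pmat, hi, hiL, hj, ← hq]
      rw [Finset.sum_congr rfl (fun i _ => hrow i)]
      have hlast : rho L lam (Fin.last L) * Pmat L lam (Fin.last L) j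
          = q / (1 + ((L:ℝ) - 1) * lam) * q^L := by
        simp [rho, Pmat, Fin.last, hj, ← hq]
      rw [hlast]
      have hs : ∑ i : Fin L, lam / (1 + ((L:ℝ) - 1) * lam) * q^(L - i.val)
          = lam / (1 + ((L:ℝ) - 1) * lam) * ∑ m ∈ Finset.range L, q^(L - m) := by
        rw [Finset.mul_sum]
        exact Fin.sum_univ_eq_sum_range (fun m => lam / (1 + ((L:ℝ) - 1) * lam) * q^(L - m)) L
      rw [hs]
      have href : ∑ m ∈ Finset.range L, q^(L - m) = q * ∑ k ∈ Finset.range L, q^k := by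
        rw [Finset.mul_sum]
        rw [← Finset.sum_range_reflect (fun m => q^(L - m)) L]
        apply Finset.sum_congr rfl
        intro k hk
        have hk' := Finset.mem_range.mp hk
        have : L - (L - 1 - k) = k + 1 := by omega
        rw [this, pow_succ]
        ring
      rw [href]
      have hgL := hg L
      have hrj : rho L lam j = q / (1 + ((L:ℝ) - 1) * lam) := by simp [rho, hj, ← hq]
      rw [hrj]
      field_simp
      congr 1
      rw [mul_comm lam, hgL]
      ring
    · -- column j < L
      have hjL : j.val < L := by omega
      have hrow : ∀ i : Fin L,
          rho L lam i.castSucc * Pmat L lam i.castSucc j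
            = lam / (1 + ((L:ℝ) - 1) * lam) *
              (if i.val ≤ j.val then q^(j.val - i.val) * lam else 0) := by
        intro i
        have hiL : i.val ≠ L := (Nat.lt_iff_le_and_ne.mp i.isLt).2
        simp [rho, Pmat, hiL, hj, ← hq]
      rw [Finset.sum_congr rfl (fun i _ => hrow i)]
      have hlast : rho L lam (Fin.last L) * Pmat L lam (Fin.last L) j
          = q / (1 + ((L:ℝ) - 1) * lam) * (q^(j.val) * lam) := by
        simp [rho, Pmat, Fin.last, hj, ← hq]
      rw [hlast]
      have hs : ∑ i : Fin L, lam / (1 + ((L:ℝ) - 1) * lam) *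
              (if i.val ≤ j.val then q^(j.val - i.val) * lam else 0)
          = lam / (1 + ((L:ℝ) - 1) * lam) *
            ∑ m ∈ Finset.range L, (if m ≤ j.val then q^(j.val - m) * lam else 0) := by
        rw [Finset.mul_sum]
        exact Fin.sum_univ_eq_sum_range
          (fun m => lam / (1 + ((L:ℝ) - 1) * lam) * (if m ≤ j.val then q^(j.val - m) * lam else 0)) L
      rw [hs]
      have hsub : ∑ m ∈ Finset.range L, (if m ≤ j.val then q^(j.val - m) * lam else 0)
          = ∑ m ∈ Finset.range (j.val + 1), q^(j.val - m) * lam := by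
        rw [← Finset.sum_subset (Finset.range_subset_range.mpr (by omega : j.val + 1 ≤ L))]
        · apply Finset.sum_congr rfl
          intro m hm
          have := Finset.mem_range.mp hm
          simp [Nat.lt_succ_iff.mp this]
        · intro m hm hm'
          have h2 := Finset.mem_range.not.mp hm'
          have : ¬ m ≤ j.val := by omega
          simp [this]
      rw [hsub]
      have href : ∑ m ∈ Finset.range (j.val + 1), q^(j.val - m) * lam
          = (∑ k ∈ Finset.range (j.val + 1), q^k) * lam := by
        rw [Finset.sum_mul, ← Finset.sum_range_reflect (fun m => q^(j.val - m) * lam) (j.val + 1)]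
        apply Finset.sum_congr rfl
        intro k hk
        have hk' := Finset.mem_range.mp hk
        have : j.val - (j.val + 1 - 1 - k) = k := by omega
        rw [this]
      rw [href, hg (j.val + 1)]
      have hrj : rho L lam j = lam / (1 + ((L:ℝ) - 1) * lam) := by simp [rho, hj]
      rw [hrj]
      field_simp
      ring

end MTD1D
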